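/- arXiv:1311.2805 — 4 statements merged into one kernel-verified Lean document; each statement's English description precedes it below -/
import Mathlib

section
/- Let Fin denote (a skeleton of) the category of finite sets and all set maps, equipped with the symmetric monoidal structure given by disjoint union. Equip the functor category Fun(Finᵒᵖ, Type) with the Day convolution monoidal structure induced by disjoint union on Fin. Then for any two types X and Y there is an isomorphism, natural in X and Y, between the Day convolution of the presheaves S ↦ (S → X) and S ↦ (S → Y), and the presheaf S ↦ (S → X ⊕ Y); i.e. Map(−, X) ⊗_{Day} Map(−, Y) ≅ Map(−, X ⊔ Y). -/
open CategoryTheory Opposite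

/-- A skeleton of the category of finite sets: objects are natural numbers `n`,
thought of as the finite sets `Fin n`, and morphisms are all functions. -/
structure FinCat : Type where
  n : ℕ

instance : Category FinCat where
  Hom m n := Fin m.n → Fin n.n
  id _ := id
  comp f g := g ∘ f

/-- The symmetric monoidal (disjoint union) structure on `FinCat`: the sum functor. -/
def sumFunctor : FinCat × FinCat ⥤ FinCat where
  obj p := ⟨p.1.n + p.2.n⟩
  map {p q} f := fun i => finSumFinEquiv (Sum.map f.1 f.2 (finSumFinEquiv.symm i))
  map_id p := by
    funext i
    simp [CategoryStruct.id]
  map_comp {p q r} f g := by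
    funext i
    simp [CategoryStruct.comp, Function.comp]

/-- The presheaf `Map(−, X)` on `FinCat` sending a finite set `S` to the set of
functions `S → X`. -/
def mapTo (X : Type) : FinCatᵒᵖ ⥤ Type where
  obj S := Fin S.unop.n → X
  map f := TypeCat.ofHom fun g => g ∘ f.unop

/-- Functoriality of `Map(−, X)` in `X`. -/
def mapToMap {X Y : Type} (u : X → Y) : mapTo X ⟶ mapTo Y where
  app S := TypeCat.ofHom fun g => u ∘ g

/-- The external product of two presheaves on `FinCat`. -/
def extProd (F G : FinCatᵒᵖ ⥤ Type) : (FinCat × FinCat)ᵒᵖ ⥤ Type where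
  obj p := F.obj (op p.unop.1) × G.obj (op p.unop.2)
  map f := TypeCat.ofHom fun x => (F.map (f.unop.1).op x.1, G.map (f.unop.2).op x.2)
  map_id p := by
    ext x
    · simp
    · change G.map (𝟙 (unop p).2).op x.2 = x.2
      simp
  map_comp f g := by
    ext x
    · simp
    · change G.map (g.unop.2 ≫ f.unop.2).op x.2 = G.map g.unop.2.op (G.map f.unop.2.op x.2)
      simp

/-- Functoriality of the external product. -/
def extProdMap {F F' G G' : FinCatᵒᵖ ⥤ Type} (α : F ⟶ F') (β : G ⟶ G') :
    extProd F G ⟶ extProd F' G' where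
  app p := TypeCat.ofHom fun x => (α.app _ x.1, β.app _ x.2)
  naturality p q f := by
    ext x
    exact Prod.ext (ConcreteCategory.congr_hom (α.naturality (f.unop.1).op) x.1 :)
      (ConcreteCategory.congr_hom (β.naturality (f.unop.2).op) x.2 :)

/-- The Day convolution of two presheaves on `FinCat` with respect to the disjoint
union monoidal structure: the left Kan extension along the sum functor of their
external product. -/
noncomputable def dayConv (F G : FinCatᵒᵖ ⥤ Type) : FinCatᵒᵖ ⥤ Type :=
  sumFunctor.op.lan.obj (extProd F G)

/-- Functoriality of the Day convolution. -/
noncomputable def dayConvMap {F F' G G' : FinCatᵒᵖ ⥤ Type} (α : F ⟶ F') (β : G ⟶ G') :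
    dayConv F G ⟶ dayConv F' G' :=
  sumFunctor.op.lan.map (extProdMap α β)

/-! ### Auxiliary constructions -/

/-- The comparison natural transformation. -/
def theta (X Y : Type) : extProd (mapTo X) (mapTo Y) ⟶ sumFunctor.op ⋙ mapTo (X ⊕ Y) where
  app p := TypeCat.ofHom fun fg => fun i => Sum.map fg.1 fg.2 (finSumFinEquiv.symm i)
  naturality p q f := by
    ext fg
    funext i
    show Sum.map (fg.1 ∘ f.unop.1) (fg.2 ∘ f.unop.2) (finSumFinEquiv.symm i)
      = Sum.map fg.1 fg.2 (finSumFinEquiv.symm (finSumFinEquiv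
          (Sum.map f.unop.1 f.unop.2 (finSumFinEquiv.symm i))))
    rw [Equiv.symm_apply_apply]
    cases finSumFinEquiv.symm i <;> rfl

section Canon

variable {X Y : Type} {n : ℕ} (h : Fin n → X ⊕ Y)

/-- number of indices sent to the left summand -/
def cA : ℕ := Fintype.card {i : Fin n // (h i).isLeft = true}

def cB : ℕ := Fintype.card {i : Fin n // ¬ (h i).isLeft = true}

noncomputable def eL : Fin (cA h) ≃ {i : Fin n // (h i).isLeft = true} :=
  (Fintype.equivFin _).symm

noncomputable def eR : Fin (cB h) ≃ {i : Fin n // ¬ (h i).isLeft = true} :=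
  (Fintype.equivFin _).symm

noncomputable def phiCanon : Fin n → Fin (cA h + cB h) := fun i =>
  finSumFinEquiv (Sum.map (eL h).symm (eR h).symm
    ((Equiv.sumCompl (fun i => (h i).isLeft = true)).symm i))

lemma exF (j : Fin (cA h)) : ∃ x, h ((eL h j).1) = Sum.inl x := by
  have := (eL h j).2
  cases hx : h ((eL h j).1) with
  | inl x => exact ⟨x, rfl⟩
  | inr y => rw [hx] at this; simp at this

lemma exG (j : Fin (cB h)) : ∃ y, h ((eR h j).1) = Sum.inr y := by
  have := (eR h j).2
  cases hx : h ((eR h j).1) with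
  | inl x => rw [hx] at this; simp at this
  | inr y => exact ⟨y, rfl⟩

noncomputable def fCanon : Fin (cA h) → X := fun j => (exF h j).choose

noncomputable def gCanon : Fin (cB h) → Y := fun j => (exG h j).choose

lemma fCanon_spec (j : Fin (cA h)) : h ((eL h j).1) = Sum.inl (fCanon h j) :=
  (exF h j).choose_spec

lemma gCanon_spec (j : Fin (cB h)) : h ((eR h j).1) = Sum.inr (gCanon h j) :=
  (exG h j).choose_spec

lemma decomp_canon (i : Fin n) :
    Sum.map (fCanon h) (gCanon h) (finSumFinEquiv.symm (phiCanon h i)) = h i := by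
  unfold phiCanon
  rw [Equiv.symm_apply_apply]
  by_cases pf : (h i).isLeft = true
  · rw [Equiv.sumCompl_symm_apply_of_pos (p := fun i => (h i).isLeft = true) (a := i) pf]
    have := fCanon_spec h ((eL h).symm ⟨i, pf⟩)
    rw [Equiv.apply_symm_apply] at this
    simpa using this.symm
  · rw [Equiv.sumCompl_symm_apply_of_neg (p := fun i => (h i).isLeft = true) (a := i) pf]
    have := gCanon_spec h ((eR h).symm ⟨i, pf⟩)
    rw [Equiv.apply_symm_apply] at this
    simpa using this.symm

end Canon

section Indep

variable {X Y : Type} (H : FinCatᵒᵖ ⥤ Type)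
  (γ : extProd (mapTo X) (mapTo Y) ⟶ sumFunctor.op ⋙ H)

/-- The canonical value associated to `h`. -/
noncomputable def canonVal {n : ℕ} (h : Fin n → X ⊕ Y) : H.obj (op ⟨n⟩) :=
  H.map (show (⟨n⟩ : FinCat) ⟶ (⟨cA h + cB h⟩ : FinCat) from phiCanon h).op
    (γ.app (op (⟨cA h⟩, ⟨cB h⟩)) (fCanon h, gCanon h))

lemma indep {n : ℕ} (h : Fin n → X ⊕ Y) (a b : ℕ)
    (ψ : Fin n → Fin (a + b)) (f : Fin a → X) (g : Fin b → Y)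
    (hd : ∀ i, Sum.map f g (finSumFinEquiv.symm (ψ i)) = h i) :
    H.map (show (⟨n⟩ : FinCat) ⟶ (⟨a + b⟩ : FinCat) from ψ).op
      (γ.app (op (⟨a⟩, ⟨b⟩)) (f, g)) = canonVal H γ h := by
  classical
  -- construct α
  have exA : ∀ j : Fin (cA h), ∃ k : Fin a,
      finSumFinEquiv.symm (ψ ((eL h j).1)) = Sum.inl k := by
    intro j
    have hspec := fCanon_spec h j
    have := hd ((eL h j).1)
    rw [hspec] at this
    cases hk : finSumFinEquiv.symm (ψ ((eL h j).1)) with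
    | inl k => exact ⟨k, rfl⟩
    | inr k => rw [hk] at this; simp at this
  have exB : ∀ j : Fin (cB h), ∃ k : Fin b,
      finSumFinEquiv.symm (ψ ((eR h j).1)) = Sum.inr k := by
    intro j
    have hspec := gCanon_spec h j
    have := hd ((eR h j).1)
    rw [hspec] at this
    cases hk : finSumFinEquiv.symm (ψ ((eR h j).1)) with
    | inl k => rw [hk] at this; simp at this
    | inr k => exact ⟨k, rfl⟩
  set α : Fin (cA h) → Fin a := fun j => (exA j).choose with hα
  set β : Fin (cB h) → Fin b := fun j => (exB j).choose with hβ
  have c1 : ∀ j, f (α j) = fCanon h j := by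
    intro j
    have hk := (exA j).choose_spec
    have := hd ((eL h j).1)
    rw [hk, fCanon_spec h j] at this
    simpa using this
  have c1' : ∀ j, g (β j) = gCanon h j := by
    intro j
    have hk := (exB j).choose_spec
    have := hd ((eR h j).1)
    rw [hk, gCanon_spec h j] at this
    simpa using this
  have keyA : ∀ j : Fin (cA h), finSumFinEquiv (Sum.inl (α j)) = ψ ((eL h j).1) := by
    intro j
    have := congrArg finSumFinEquiv (exA j).choose_spec
    rw [Equiv.apply_symm_apply] at this
    exact this.symm
  have keyB : ∀ j : Fin (cB h), finSumFinEquiv (Sum.inr (β j)) = ψ ((eR h j).1) := by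
    intro j
    have := congrArg finSumFinEquiv (exB j).choose_spec
    rw [Equiv.apply_symm_apply] at this
    exact this.symm
  have c2 : ∀ i, finSumFinEquiv (Sum.map α β (finSumFinEquiv.symm (phiCanon h i))) = ψ i := by
    intro i
    unfold phiCanon
    rw [Equiv.symm_apply_apply]
    by_cases pf : (h i).isLeft = true
    · rw [Equiv.sumCompl_symm_apply_of_pos (p := fun i => (h i).isLeft = true) (a := i) pf]
      show finSumFinEquiv (Sum.inl (α ((eL h).symm ⟨i, pf⟩))) = ψ i
      rw [keyA ((eL h).symm ⟨i, pf⟩)]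
      exact congrArg ψ (congrArg Subtype.val (Equiv.apply_symm_apply _ _))
    · rw [Equiv.sumCompl_symm_apply_of_neg (p := fun i => (h i).isLeft = true) (a := i) pf]
      show finSumFinEquiv (Sum.inr (β ((eR h).symm ⟨i, pf⟩))) = ψ i
      rw [keyB ((eR h).symm ⟨i, pf⟩)]
      exact congrArg ψ (congrArg Subtype.val (Equiv.apply_symm_apply _ _))
  -- now use naturality of γ
  let ρ : ((⟨cA h⟩, ⟨cB h⟩) : FinCat × FinCat) ⟶ ((⟨a⟩, ⟨b⟩) : FinCat × FinCat) := (α, β)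
  have hψ : (show (⟨n⟩ : FinCat) ⟶ (⟨a + b⟩ : FinCat) from ψ)
      = (show (⟨n⟩ : FinCat) ⟶ (⟨cA h + cB h⟩ : FinCat) from phiCanon h) ≫ sumFunctor.map ρ := by
    funext i
    exact (c2 i).symm
  rw [hψ]
  have : ((show (⟨n⟩ : FinCat) ⟶ (⟨cA h + cB h⟩ : FinCat) from phiCanon h) ≫
      sumFunctor.map ρ).op = (sumFunctor.map ρ).op ≫
      (show (⟨n⟩ : FinCat) ⟶ (⟨cA h + cB h⟩ : FinCat) from phiCanon h).op := rfl
  erw [this, H.map_comp]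
  show H.map _ (H.map (sumFunctor.map ρ).op (γ.app (op (⟨a⟩, ⟨b⟩)) (f, g))) = _
  have hnat := ConcreteCategory.congr_hom (γ.naturality ρ.op)
    ((f, g) : (extProd (mapTo X) (mapTo Y)).obj (op (⟨a⟩, ⟨b⟩)))
  have : H.map (sumFunctor.map ρ).op (γ.app (op (⟨a⟩, ⟨b⟩)) (f, g))
      = γ.app (op (⟨cA h⟩, ⟨cB h⟩)) (f ∘ α, g ∘ β) := hnat.symm
  rw [this]
  have : (f ∘ α, g ∘ β) = (fCanon h, gCanon h) := by
    ext j
    · exact c1 j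
    · exact c1' j
  erw [this]
  rfl

end Indep

section Desc

variable {X Y : Type} {H : FinCatᵒᵖ ⥤ Type}

/-- The canonical decomposition realizes `h`. -/
lemma canon_decomp_eq {n : ℕ} (h : Fin n → X ⊕ Y) :
    (mapTo (X ⊕ Y)).map (show (⟨n⟩ : FinCat) ⟶ (⟨cA h + cB h⟩ : FinCat) from phiCanon h).op
      ((theta X Y).app (op (⟨cA h⟩, ⟨cB h⟩)) (fCanon h, gCanon h)) = h := by
  funext i
  exact decomp_canon h i

/-- The descended natural transformation. -/
noncomputable def descApp (γ : extProd (mapTo X) (mapTo Y) ⟶ sumFunctor.op ⋙ H) :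
    mapTo (X ⊕ Y) ⟶ H where
  app S := TypeCat.ofHom fun h => canonVal H γ (X := X) (Y := Y) (n := S.unop.n) h
  naturality S T u := by
    ext h
    show canonVal H γ (h ∘ u.unop) = H.map u (canonVal H γ h)
    rw [← indep H γ h (cA h) (cB h) (phiCanon h) (fCanon h) (gCanon h) (decomp_canon h)]
    rw [← indep H γ (h ∘ u.unop) (cA h) (cB h) (phiCanon h ∘ u.unop) (fCanon h) (gCanon h)
      (fun i => decomp_canon h (u.unop i))]
    have : (show ((⟨T.unop.n⟩ : FinCat)) ⟶ (⟨cA h + cB h⟩ : FinCat) from phiCanon h ∘ u.unop).op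
        = (show ((⟨S.unop.n⟩ : FinCat)) ⟶ (⟨cA h + cB h⟩ : FinCat) from phiCanon h).op ≫ u := rfl
    rw [this, H.map_comp]
    rfl

lemma theta_desc (γ : extProd (mapTo X) (mapTo Y) ⟶ sumFunctor.op ⋙ H) :
    theta X Y ≫ Functor.whiskerLeft sumFunctor.op (descApp γ) = γ := by
  ext ⟨⟨A, B⟩⟩ fg
  show canonVal H γ ((theta X Y).app (op (A, B)) fg) = γ.app (op (A, B)) fg
  rw [← indep H γ ((theta X Y).app (op (A, B)) fg) A.n B.n id fg.1 fg.2 (fun i => rfl)]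
  have : (show ((⟨A.n + B.n⟩ : FinCat)) ⟶ (⟨A.n + B.n⟩ : FinCat) from id).op
      = 𝟙 (op (⟨A.n + B.n⟩ : FinCat)) := rfl
  erw [this, H.map_id]
  rfl

lemma desc_uniq (γ : extProd (mapTo X) (mapTo Y) ⟶ sumFunctor.op ⋙ H)
    (δ : mapTo (X ⊕ Y) ⟶ H)
    (w : theta X Y ≫ Functor.whiskerLeft sumFunctor.op δ = γ) :
    δ = descApp γ := by
  ext S h
  show δ.app S h = canonVal H γ h
  let q : (FinCat × FinCat)ᵒᵖ := op ((⟨cA h⟩, ⟨cB h⟩) : FinCat × FinCat)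
  let φop : op ((⟨cA h + cB h⟩ : FinCat)) ⟶ S :=
    (show (⟨S.unop.n⟩ : FinCat) ⟶ (⟨cA h + cB h⟩ : FinCat) from phiCanon h).op
  let x : (mapTo (X ⊕ Y)).obj (op ((⟨cA h + cB h⟩ : FinCat))) :=
    (theta X Y).app q (fCanon h, gCanon h)
  have hn : δ.app S ((mapTo (X ⊕ Y)).map φop x) = H.map φop (δ.app _ x) :=
    ConcreteCategory.congr_hom (δ.naturality φop) x
  have hw : δ.app (op ((⟨cA h + cB h⟩ : FinCat))) x = γ.app q (fCanon h, gCanon h) :=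
    by subst w; rfl
  calc δ.app S h = δ.app S ((mapTo (X ⊕ Y)).map φop x) :=
        congrArg (δ.app S) (canon_decomp_eq h).symm
    _ = H.map φop (δ.app _ x) := hn
    _ = H.map φop (γ.app q (fCanon h, gCanon h)) := congrArg (H.map φop) hw
    _ = canonVal H γ h := rfl

instance mapToSum_isLKE (X Y : Type) :
    (mapTo (X ⊕ Y)).IsLeftKanExtension (theta X Y) := by
  let desc0 : ∀ G : Functor.LeftExtension sumFunctor.op (extProd (mapTo X) (mapTo Y)),
      Functor.LeftExtension.mk (mapTo (X ⊕ Y)) (theta X Y) ⟶ G := fun G =>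
    StructuredArrow.homMk
      (descApp (H := G.right)
        (show extProd (mapTo X) (mapTo Y) ⟶ sumFunctor.op ⋙ G.right from G.hom))
      (theta_desc (H := G.right)
        (show extProd (mapTo X) (mapTo Y) ⟶ sumFunctor.op ⋙ G.right from G.hom))
  have uniq0 : ∀ (G : Functor.LeftExtension sumFunctor.op (extProd (mapTo X) (mapTo Y)))
      (m : Functor.LeftExtension.mk (mapTo (X ⊕ Y)) (theta X Y) ⟶ G), m = desc0 G := by
    intro G m
    apply StructuredArrow.hom_ext
    exact desc_uniq (H := G.right)
      (show extProd (mapTo X) (mapTo Y) ⟶ sumFunctor.op ⋙ G.right from G.hom)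
      m.right (StructuredArrow.w m)
  exact ⟨⟨Limits.IsInitial.ofUniqueHom desc0 uniq0⟩⟩

end Desc

lemma theta_natural {X X' Y Y' : Type} (u : X → X') (v : Y → Y') :
    extProdMap (mapToMap u) (mapToMap v) ≫ theta X' Y' =
      theta X Y ≫ Functor.whiskerLeft sumFunctor.op (mapToMap (Sum.map u v)) := by
  ext p fg
  funext i
  show Sum.map (u ∘ fg.1) (v ∘ fg.2) (finSumFinEquiv.symm i)
    = Sum.map u v (Sum.map fg.1 fg.2 (finSumFinEquiv.symm i))
  cases finSumFinEquiv.symm i <;> rfl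

noncomputable def dayIso (X Y : Type) : dayConv (mapTo X) (mapTo Y) ≅ mapTo (X ⊕ Y) :=
  Functor.leftKanExtensionUnique (sumFunctor.op.lan.obj (extProd (mapTo X) (mapTo Y)))
    (sumFunctor.op.lanUnit.app (extProd (mapTo X) (mapTo Y))) (mapTo (X ⊕ Y)) (theta X Y)

lemma dayIso_fac (X Y : Type) :
    sumFunctor.op.lanUnit.app (extProd (mapTo X) (mapTo Y)) ≫
      Functor.whiskerLeft sumFunctor.op (dayIso X Y).hom = theta X Y := by
  have h := Functor.descOfIsLeftKanExtension_fac
    (sumFunctor.op.lan.obj (extProd (mapTo X) (mapTo Y)))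
    (sumFunctor.op.lanUnit.app (extProd (mapTo X) (mapTo Y)))
    (mapTo (X ⊕ Y)) (𝟙 _ ≫ theta X Y)
  rw [Category.id_comp] at h
  exact h

/-- Day convolution of representable-type presheaves: there is an isomorphism,
natural in `X` and `Y`, `Map(−, X) ⊛ Map(−, Y) ≅ Map(−, X ⊕ Y)`. -/
theorem dayConv_mapTo_iso :
    ∃ e : ∀ X Y : Type, dayConv (mapTo X) (mapTo Y) ≅ mapTo (X ⊕ Y),
      ∀ (X X' Y Y' : Type) (u : X → X') (v : Y → Y'),
        dayConvMap (mapToMap u) (mapToMap v) ≫ (e X' Y').hom =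
          (e X Y).hom ≫ mapToMap (Sum.map u v) := by
  refine ⟨dayIso, fun X X' Y Y' u v => ?_⟩
  apply Functor.hom_ext_of_isLeftKanExtension
    (sumFunctor.op.lan.obj (extProd (mapTo X) (mapTo Y)))
    (sumFunctor.op.lanUnit.app (extProd (mapTo X) (mapTo Y)))
  unfold dayConvMap dayConv
  rw [Functor.whiskerLeft_comp, Functor.whiskerLeft_comp]
  have hnat := sumFunctor.op.lanUnit.naturality (extProdMap (mapToMap u) (mapToMap v))
  rw [← Category.assoc, show sumFunctor.op.lanUnit.app (extProd (mapTo X) (mapTo Y)) ≫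
      Functor.whiskerLeft sumFunctor.op (sumFunctor.op.lan.map
        (extProdMap (mapToMap u) (mapToMap v))) =
      extProdMap (mapToMap u) (mapToMap v) ≫
        sumFunctor.op.lanUnit.app (extProd (mapTo X') (mapTo Y')) from hnat.symm]
  rw [Category.assoc, dayIso_fac, theta_natural, ← Category.assoc, dayIso_fac]
end

section
/- Let R be a commutative ring and let A be an étale commutative R-algebra. View A as a module over the enveloping algebra A ⊗_R A via the multiplication map μ : A ⊗_R A → A. Then the kernel of μ is generated by a single idempotent element of A ⊗_R A; consequently A is a direct summand of A ⊗_R A as an (A ⊗_R A)-module, and in particular A is a projective (A ⊗_R A)-module. -/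
open TensorProduct

/-- For an étale commutative `R`-algebra `A`, viewing `A` as a module over `A ⊗[R] A` via
the multiplication map `μ : A ⊗[R] A → A`, the kernel of `μ` is generated by a single
idempotent element; consequently `A` is a direct summand of `A ⊗[R] A` as an
`(A ⊗[R] A)`-module, and in particular `A` is a projective `(A ⊗[R] A)`-module. -/
theorem etale_mul_ker_idempotent_and_projective
    (R A : Type u) [CommRing R] [CommRing A] [Algebra R A] [Algebra.Etale R A] :
    letI : Algebra (A ⊗[R] A) A :=
      (Algebra.TensorProduct.lmul' R (S := A)).toRingHom.toAlgebra
    letI : Module (A ⊗[R] A) (A ⊗[R] A) := Semiring.toModule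
    ∃ e : A ⊗[R] A, IsIdempotentElem e ∧
      RingHom.ker (algebraMap (A ⊗[R] A) A) = Ideal.span {e} ∧
      (∃ s : A →ₗ[A ⊗[R] A] A ⊗[R] A,
        (Algebra.linearMap (A ⊗[R] A) A).comp s = LinearMap.id) ∧
      Module.Projective (A ⊗[R] A) A := by
  letI : Algebra (A ⊗[R] A) A :=
    (Algebra.TensorProduct.lmul' R (S := A)).toRingHom.toAlgebra
  letI : Module (A ⊗[R] A) (A ⊗[R] A) := Semiring.toModule
  have hμ : ∀ x : A ⊗[R] A,
      algebraMap (A ⊗[R] A) A x = Algebra.TensorProduct.lmul' R (S := A) x := fun _ => rfl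
  have hker : RingHom.ker (algebraMap (A ⊗[R] A) A) = KaehlerDifferential.ideal R A := rfl
  haveI : Algebra.FinitePresentation R A := Algebra.Etale.finitePresentation (R := R) (A := A)
  haveI : Algebra.EssFiniteType R A := inferInstance
  have hsub : Subsingleton (Ω[A⁄R]) := inferInstance
  have hid : IsIdempotentElem (KaehlerDifferential.ideal R A) :=
    (Ideal.cotangent_subsingleton_iff _).mp hsub
  obtain ⟨e, he, hspan⟩ :=
    (Ideal.isIdempotentElem_iff_of_fg _ (KaehlerDifferential.ideal_fg R A)).mp hid
  rw [Ideal.submodule_span_eq] at hspan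
  have heker : algebraMap (A ⊗[R] A) A e = 0 := by
    have : e ∈ RingHom.ker (algebraMap (A ⊗[R] A) A) := by
      rw [hker, hspan]; exact Ideal.subset_span rfl
    rwa [RingHom.mem_ker] at this
  have he0 : e * (1 - e) = 0 := by rw [mul_sub, mul_one, he.eq, sub_self]
  -- key identity : x * (1 - e) = (μ x ⊗ 1) * (1 - e)
  have key : ∀ x : A ⊗[R] A,
      x * (1 - e) = (algebraMap (A ⊗[R] A) A x) ⊗ₜ[R] (1 : A) * (1 - e) := by
    intro x
    have hmem : x - (algebraMap (A ⊗[R] A) A x) ⊗ₜ[R] (1 : A) ∈ Ideal.span {e} := by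
      rw [← hspan, ← hker, RingHom.mem_ker, map_sub]
      have h1 : algebraMap (A ⊗[R] A) A ((algebraMap (A ⊗[R] A) A x) ⊗ₜ[R] (1 : A)) =
          algebraMap (A ⊗[R] A) A x := by
        rw [hμ ((algebraMap (A ⊗[R] A) A x) ⊗ₜ[R] (1 : A)),
          Algebra.TensorProduct.lmul'_apply_tmul, mul_one]
      rw [h1, sub_self]
    obtain ⟨c, hc⟩ := Ideal.mem_span_singleton.mp hmem
    have hx : x = (algebraMap (A ⊗[R] A) A x) ⊗ₜ[R] (1 : A) + e * c := by
      rw [← hc]; ring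
    calc x * (1 - e)
        = ((algebraMap (A ⊗[R] A) A x) ⊗ₜ[R] (1 : A) + e * c) * (1 - e) := by rw [← hx]
      _ = (algebraMap (A ⊗[R] A) A x) ⊗ₜ[R] (1 : A) * (1 - e) + c * (e * (1 - e)) := by ring
      _ = (algebraMap (A ⊗[R] A) A x) ⊗ₜ[R] (1 : A) * (1 - e) := by rw [he0, mul_zero, add_zero]
  have hμt : ∀ a : A, algebraMap (A ⊗[R] A) A (a ⊗ₜ[R] (1 : A)) = a := by
    intro a
    rw [hμ, Algebra.TensorProduct.lmul'_apply_tmul, mul_one]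
  refine ⟨e, he, by rw [hker, hspan], ?_⟩
  have hsmulA : ∀ (x : A ⊗[R] A) (a : A), x • a = algebraMap (A ⊗[R] A) A x * a :=
    fun _ _ => rfl
  letI s : A →ₗ[A ⊗[R] A] A ⊗[R] A :=
    { toFun := fun a => a ⊗ₜ[R] (1 : A) * (1 - e)
      map_add' := fun a b => by
        show ((a + b) ⊗ₜ[R] (1 : A)) * (1 - e) =
          a ⊗ₜ[R] (1 : A) * (1 - e) + b ⊗ₜ[R] (1 : A) * (1 - e)
        rw [add_tmul, add_mul]
      map_smul' := fun x a => by
        show ((x • a) ⊗ₜ[R] (1 : A)) * (1 - e) = x * (a ⊗ₜ[R] (1 : A) * (1 - e))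
        rw [← mul_assoc, key (x * a ⊗ₜ[R] (1 : A)), hsmulA, map_mul, hμt] }
  have hcomp : (Algebra.linearMap (A ⊗[R] A) A).comp s = LinearMap.id := by
    ext a
    show algebraMap (A ⊗[R] A) A (a ⊗ₜ[R] (1 : A) * (1 - e)) = a
    rw [map_mul, map_sub, map_one, heker, sub_zero, mul_one, hμt]
  exact ⟨⟨s, hcomp⟩, Module.Projective.of_split s (Algebra.linearMap (A ⊗[R] A) A) hcomp⟩
end

section
/- Let R be a commutative ring and let A be an étale commutative R-algebra. View A as a module over A ⊗_R A via the multiplication map μ(a ⊗ b) = ab. Then Tor_n^{A ⊗_R A}(A, A) = 0 for every n ≥ 1 (and Tor_0^{A ⊗_R A}(A, A) ≅ A); that is, the unit map from A to the Hochschild homology of A over R is a quasi-isomorphism. -/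
open TensorProduct CategoryTheory

/-- Weibel–Geller étale descent for Hochschild homology: for an étale commutative
`R`-algebra `A`, viewed as a module over `A ⊗[R] A` via the multiplication map,
`Tor_n^{A ⊗[R] A}(A, A) = 0` for all `n ≥ 1`, and `Tor_0^{A ⊗[R] A}(A, A) ≅ A`;
i.e. the unit map from `A` to the Hochschild homology of `A` over `R` is a
quasi-isomorphism. -/
theorem etale_descent_hochschild_homology
    (R A : Type u) [CommRing R] [CommRing A] [Algebra R A] [Algebra.Etale R A] :
    letI : Algebra (A ⊗[R] A) A :=
      (Algebra.TensorProduct.lmul' R (S := A)).toRingHom.toAlgebra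
    (∀ n : ℕ, 1 ≤ n →
      Limits.IsZero (((Tor (ModuleCat.{u} (A ⊗[R] A)) n).obj
        (ModuleCat.of (A ⊗[R] A) A)).obj (ModuleCat.of (A ⊗[R] A) A))) ∧
    Nonempty ((((Tor (ModuleCat.{u} (A ⊗[R] A)) 0).obj
        (ModuleCat.of (A ⊗[R] A) A)).obj (ModuleCat.of (A ⊗[R] A) A)) ≅
      ModuleCat.of (A ⊗[R] A) A) := by
  letI : Algebra (A ⊗[R] A) A :=
    (Algebra.TensorProduct.lmul' R (S := A)).toRingHom.toAlgebra
  have halg : algebraMap (A ⊗[R] A) A = (Algebra.TensorProduct.lmul' R (S := A)).toRingHom :=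
    rfl
  haveI : IsScalarTower A (A ⊗[R] A) A := IsScalarTower.of_algebraMap_eq fun a => by
    rw [halg]
    simp [Algebra.TensorProduct.algebraMap_apply]
  haveI : Algebra.EssFiniteType A (A ⊗[R] A) :=
    Algebra.EssFiniteType.of_finiteType A (A ⊗[R] A)
  have proj : Module.Projective (A ⊗[R] A) A :=
    Algebra.FormallyUnramified.projective_of_restrictScalars (R := A) (S := A ⊗[R] A) A
  haveI : Projective (ModuleCat.of (A ⊗[R] A) A) := (IsProjective.iff_projective A).mp proj
  constructor
  · intro n hn
    obtain ⟨m, rfl⟩ := Nat.exists_eq_add_of_le hn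
    rw [Nat.add_comm]
    exact isZero_Tor_succ_of_projective _ _ _ m
  · refine ⟨?_⟩
    let F := (MonoidalCategory.tensoringLeft (ModuleCat.{u} (A ⊗[R] A))).obj
      (ModuleCat.of (A ⊗[R] A) A)
    have e0 : (((Tor (ModuleCat.{u} (A ⊗[R] A)) 0).obj
        (ModuleCat.of (A ⊗[R] A) A)).obj (ModuleCat.of (A ⊗[R] A) A)) ≅
        F.obj (ModuleCat.of (A ⊗[R] A) A) :=
      by
        haveI : Limits.PreservesColimits F :=
          (inferInstance : Limits.PreservesColimits (MonoidalCategory.tensorLeft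
            (ModuleCat.of (A ⊗[R] A) A)))
        exact (Functor.leftDerivedZeroIsoSelf F).app _
    have e1 : (A ⊗[A ⊗[R] A] A) ≃ₗ[A ⊗[R] A] A := by
      haveI hcs : TensorProduct.CompatibleSMul (A ⊗[R] A) A A A := inferInstance
      let e' := Algebra.TensorProduct.lmulEquiv (A ⊗[R] A) A
      have hfun : ∀ x : A ⊗[A ⊗[R] A] A, LinearMap.mul' (A ⊗[R] A) A x = e' x := by
        intro x
        induction x using TensorProduct.induction_on with
        | zero => simp
        | tmul a b =>
          show a * b = Algebra.TensorProduct.lmul'' (A ⊗[R] A) (a ⊗ₜ b)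
          simp [Algebra.TensorProduct.lmul'']
        | add x y hx hy => rw [map_add, map_add, hx, hy]
      have hinj : Function.Injective (LinearMap.mul' (A ⊗[R] A) A) := by
        intro x y h
        apply e'.injective
        rw [← hfun, ← hfun]
        exact h
      refine LinearEquiv.ofLinear (LinearMap.mul' (A ⊗[R] A) A)
        ((TensorProduct.mk (A ⊗[R] A) A A).flip 1) (by ext a; simp) ?_
      apply LinearMap.ext
      intro x
      apply hinj
      simp
    exact e0 ≪≫ e1.toModuleIso
end

section
/- Let R be a commutative ring and let A be a commutative R-algebra which is the union of a directed (filtered) family of R-subalgebras (A_i)_{i ∈ I}, each of which is an étale R-algebra. View A as a module over A ⊗_R A via the multiplication map. Then Tor_n^{A ⊗_R A}(A, A) = 0 for every n ≥ 1; that is, the unit map from A to the Hochschild homology of A over R is a quasi-isomorphism. -/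
open TensorProduct CategoryTheory

set_option maxHeartbeats 1000000
set_option synthInstance.maxHeartbeats 400000

universe u v

section Aux

open Limits

/-- Higher `Tor` groups vanish when the first argument is a flat module. -/
lemma isZero_Tor_succ_of_flat' {S : Type u} [CommRing S] (M Y : ModuleCat.{u} S)
    [Module.Flat S M] (n : ℕ) :
    IsZero (((Tor (ModuleCat.{u} S) (n+1)).obj M).obj Y) := by
  let P : ProjectiveResolution Y := ProjectiveResolution.of Y
  refine IsZero.of_iso ?_ (P.isoLeftDerivedObj ((MonoidalCategory.tensoringLeft _).obj M) (n+1))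
  erw [← HomologicalComplex.exactAt_iff_isZero_homology]
  have hP := P.complex_exactAt_succ n
  rw [HomologicalComplex.exactAt_iff' _ (n+2) (n+1) n (by simp) (by simp)] at hP ⊢
  have h2 : ((P.complex.sc' (n+2) (n+1) n).map (MonoidalCategory.tensorLeft M)).Exact :=
    Module.Flat.lTensor_shortComplex_exact M _ hP
  exact ShortComplex.exact_of_iso
    (ShortComplex.isoMk (Iso.refl _) (Iso.refl _) (Iso.refl _) ((Category.id_comp _).trans (Category.comp_id _).symm)
      ((Category.id_comp _).trans (Category.comp_id _).symm)) h2

/-- If every element of an ideal `I` admits a "partial unit" `y ∈ I` with `y * x = x`,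
then `S ⧸ I` is a flat `S`-module. -/
lemma flat_quotient_of_pointwise_idem' {S : Type u} [CommRing S] (I : Ideal S)
    (h : ∀ x ∈ I, ∃ y ∈ I, y * x = x) : Module.Flat S (S ⧸ I) := by
  rw [Module.Flat.iff_rTensor_injective']
  intro J
  rw [← LinearMap.ker_eq_bot, eq_bot_iff]
  intro z hz
  obtain ⟨j, rfl⟩ : ∃ j : J, (j ⊗ₜ[S] (1 : S ⧸ I)) = z := by
    clear hz
    induction z using TensorProduct.induction_on with
    | zero => exact ⟨0, by simp⟩
    | tmul j m =>
      obtain ⟨s, rfl⟩ := Ideal.Quotient.mk_surjective m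
      refine ⟨s • j, ?_⟩
      rw [smul_tmul]
      congr 1
      show s • Submodule.Quotient.mk (1 : S) = _
      rw [← Submodule.Quotient.mk_smul, smul_eq_mul, mul_one]
      rfl
    | add z w hz hw =>
      obtain ⟨j₁, rfl⟩ := hz
      obtain ⟨j₂, rfl⟩ := hw
      exact ⟨j₁ + j₂, by rw [add_tmul]⟩
  have hj : (j : S) ∈ I := by
    have := congrArg (TensorProduct.lid S (S ⧸ I)) (LinearMap.mem_ker.mp hz)
    simp only [LinearMap.rTensor_tmul, Submodule.coe_subtype, lid_tmul, map_zero] at this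
    rwa [show ((j : S) • (1 : S ⧸ I)) = Ideal.Quotient.mk I (j : S) by
      show (j : S) • Submodule.Quotient.mk (1 : S) = _
      rw [← Submodule.Quotient.mk_smul, smul_eq_mul, mul_one]; rfl,
      Ideal.Quotient.eq_zero_iff_mem] at this
  obtain ⟨y, hyI, hyj⟩ := h _ hj
  rw [Submodule.mem_bot]
  have : j ⊗ₜ[S] (1 : S ⧸ I) = (y • j) ⊗ₜ[S] (1 : S ⧸ I) := by
    congr 1
    exact Subtype.ext (by simpa [smul_eq_mul] using hyj.symm)
  rw [this, smul_tmul]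
  have h1 : (y • (1 : S ⧸ I)) = 0 := by
    show y • Submodule.Quotient.mk (1 : S) = _
    rw [← Submodule.Quotient.mk_smul, smul_eq_mul, mul_one]
    exact (Submodule.Quotient.mk_eq_zero _).mpr hyI
  rw [h1, tmul_zero]

/-- Multiplication maps are natural in algebra homomorphisms. -/
lemma lmul'_naturality' {R A B : Type*} [CommRing R] [CommRing A] [CommRing B]
    [Algebra R A] [Algebra R B] (f : B →ₐ[R] A) (z : B ⊗[R] B) :
    Algebra.TensorProduct.lmul' R (Algebra.TensorProduct.map f f z) =
      f (Algebra.TensorProduct.lmul' R z) := by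
  induction z using TensorProduct.induction_on with
  | zero => simp
  | tmul a b => simp [Algebra.TensorProduct.lmul'_apply_tmul]
  | add z w hz hw => simp [hz, hw]

lemma map_val_inclusion' {R A : Type*} [CommRing R] [CommRing A] [Algebra R A]
    {Bi Bj : Subalgebra R A} (h : Bi ≤ Bj) (z : Bi ⊗[R] Bi) :
    Algebra.TensorProduct.map Bj.val Bj.val
      (Algebra.TensorProduct.map (Subalgebra.inclusion h) (Subalgebra.inclusion h) z) =
      Algebra.TensorProduct.map Bi.val Bi.val z := by
  induction z using TensorProduct.induction_on with
  | zero => simp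
  | tmul a b => simp
  | add z w hz hw => simp [hz, hw]

/-- For an ind-étale algebra, every element of the kernel of the multiplication map
admits a "partial unit" in the kernel. -/
lemma exists_idem_of_ind_etale' (R A : Type u) [CommRing R] [CommRing A] [Algebra R A]
    {ι : Type v} [Nonempty ι] (B : ι → Subalgebra R A)
    (hdir : Directed (· ≤ ·) B) (hunion : (⨆ i, B i) = ⊤)
    (hetale : ∀ i, Algebra.Etale R (B i)) (x : A ⊗[R] A)
    (hx : Algebra.TensorProduct.lmul' R x = 0) :
    ∃ y : A ⊗[R] A, Algebra.TensorProduct.lmul' R y = 0 ∧ y * x = x := by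
  have hmem : ∀ a : A, ∃ i, a ∈ B i := by
    intro a
    have h1 : a ∈ ⨆ i, B i := hunion.symm ▸ Algebra.mem_top
    have h2 : (a : A) ∈ (↑(⨆ i, B i) : Set A) := h1
    rw [Subalgebra.coe_iSup_of_directed hdir] at h2
    simpa using h2
  obtain ⟨i, x', rfl⟩ : ∃ i, ∃ x' : (B i) ⊗[R] (B i),
      Algebra.TensorProduct.map (B i).val (B i).val x' = x := by
    clear hx
    induction x using TensorProduct.induction_on with
    | zero => exact ⟨Classical.arbitrary ι, 0, by simp⟩
    | tmul a b =>
      obtain ⟨i, hi⟩ := hmem a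
      obtain ⟨j, hj⟩ := hmem b
      obtain ⟨k, hik, hjk⟩ := hdir i j
      exact ⟨k, ⟨a, hik hi⟩ ⊗ₜ ⟨b, hjk hj⟩, by simp⟩
    | add z w hz hw =>
      obtain ⟨i, z', rfl⟩ := hz
      obtain ⟨j, w', rfl⟩ := hw
      obtain ⟨k, hik, hjk⟩ := hdir i j
      refine ⟨k, Algebra.TensorProduct.map (Subalgebra.inclusion hik) (Subalgebra.inclusion hik) z'
        + Algebra.TensorProduct.map (Subalgebra.inclusion hjk) (Subalgebra.inclusion hjk) w', ?_⟩
      rw [map_add, map_val_inclusion', map_val_inclusion']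
  have hx' : Algebra.TensorProduct.lmul' R x' = 0 := by
    rw [lmul'_naturality'] at hx
    exact Subtype.coe_injective (by simpa using hx)
  haveI := hetale i
  obtain ⟨t, ht₁, ht₂⟩ :=
    (Algebra.FormallyUnramified.iff_exists_tensorProduct (R := R) (S := B i)).mp inferInstance
  have hxt : x' * t = 0 := by
    have hmem' : x' ∈ KaehlerDifferential.ideal R (B i) := by
      simpa [KaehlerDifferential.ideal, RingHom.mem_ker] using hx'
    rw [← KaehlerDifferential.span_range_eq_ideal] at hmem'
    refine Submodule.span_induction ?_ ?_ ?_ ?_ hmem'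
    · rintro _ ⟨s, rfl⟩
      exact ht₁ s
    · exact zero_mul t
    · intro z w _ _ hz hw
      rw [add_mul, hz, hw, add_zero]
    · intro c z _ hz
      rw [smul_mul_assoc, hz, smul_zero]
  refine ⟨Algebra.TensorProduct.map (B i).val (B i).val (1 - t), ?_, ?_⟩
  · rw [lmul'_naturality', map_sub, map_one, ht₂, sub_self, map_zero]
  · rw [← map_mul, sub_mul, one_mul, mul_comm t x', hxt, sub_zero]

end Aux

/-- If a commutative `R`-algebra `A` is the union of a directed family of étale
`R`-subalgebras, then, viewing `A` as a module over `A ⊗[R] A` via the multiplication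
map, `Tor_n^{A ⊗[R] A}(A, A) = 0` for all `n ≥ 1`; i.e. the unit map from `A` to the
Hochschild homology of `A` over `R` is a quasi-isomorphism. -/
theorem ind_etale_descent_hochschild_homology
    (R A : Type u) [CommRing R] [CommRing A] [Algebra R A]
    (ι : Type v) [Nonempty ι] (B : ι → Subalgebra R A)
    (hdir : Directed (· ≤ ·) B)
    (hunion : (⨆ i, B i) = ⊤)
    (hetale : ∀ i, Algebra.Etale R (B i)) :
    letI : Algebra (A ⊗[R] A) A :=
      (Algebra.TensorProduct.lmul' R (S := A)).toRingHom.toAlgebra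
    ∀ n : ℕ, 1 ≤ n →
      Limits.IsZero (((Tor (ModuleCat.{u} (A ⊗[R] A)) n).obj
        (ModuleCat.of (A ⊗[R] A) A)).obj (ModuleCat.of (A ⊗[R] A) A)) := by
  letI : Algebra (A ⊗[R] A) A :=
    (Algebra.TensorProduct.lmul' R (S := A)).toRingHom.toAlgebra
  intro n hn
  obtain ⟨m, rfl⟩ := Nat.exists_eq_succ_of_ne_zero (Nat.one_le_iff_ne_zero.mp hn)
  set S := A ⊗[R] A
  letI : Module S S := Semiring.toModule
  have hsurj : Function.Surjective (Algebra.linearMap S A) := by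
    intro a
    exact ⟨a ⊗ₜ 1, by
      show Algebra.TensorProduct.lmul' R (a ⊗ₜ[R] 1) = a
      rw [Algebra.TensorProduct.lmul'_apply_tmul, mul_one]⟩
  have hker : ∀ z : S, z ∈ LinearMap.ker (Algebra.linearMap S A) ↔
      Algebra.TensorProduct.lmul' R z = 0 := fun z => Iff.rfl
  haveI hflatQ : Module.Flat S (S ⧸ LinearMap.ker (Algebra.linearMap S A)) := by
    refine flat_quotient_of_pointwise_idem' _ ?_
    intro x hx
    obtain ⟨y, hy0, hyx⟩ := exists_idem_of_ind_etale' R A B hdir hunion hetale x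
      ((hker x).mp hx)
    exact ⟨y, (hker y).mpr hy0, hyx⟩
  haveI hflat : Module.Flat S A :=
    Module.Flat.of_linearEquiv (M := S ⧸ LinearMap.ker (Algebra.linearMap S A))
      ((Algebra.linearMap S A).quotKerEquivOfSurjective hsurj).symm
  exact @isZero_Tor_succ_of_flat' S _ (ModuleCat.of S A) (ModuleCat.of S A) hflat m
end
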